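/- Let (M, d) be a metric space and F : M → M nonexpansive with respect to d. Let u ∈ M be a fixed point of F and let (x^m)_{m∈ℕ} be a sequence in M converging to u. Suppose there are constants η, θ ∈ (0,1) and c > 0 and R > 0 such that d(F^k(x), u) ≤ c·η^k for all x with d(x, u) ≤ R and all k ∈ ℕ, and d(F(x^m), x^{m+1}) ≤ c·θ^m for all m ∈ ℕ. Then limsup_{k→∞} d(x^k, u)^{1/k} ≤ η^λ = θ^{1−λ} < 1, where λ = log θ / (log η + log θ). -/

import Mathlib

open Filter Topology

/-- a quantitative interleaving lemma for nonexpansive maps: if iterates of `F`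
contract to the fixed point `u` at rate `η` near `u`, and the sequence `x^m → u` is an
approximate orbit with errors `c θ^m`, then `x^k → u` R-linearly with rate
`η^λ = θ^{1-λ} < 1`, where `λ = log θ / (log η + log θ)`. -/
theorem approximate_orbit_linear_rate
    {M : Type*} [MetricSpace M] (F : M → M)
    (hF_nonexp : ∀ x y : M, dist (F x) (F y) ≤ dist x y)
    (u : M) (hu : F u = u)
    (x : ℕ → M) (hx : Tendsto x atTop (𝓝 u))
    (η θ c R : ℝ) (hη0 : 0 < η) (hη1 : η < 1) (hθ0 : 0 < θ) (hθ1 : θ < 1)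
    (hc : 0 < c) (hR : 0 < R)
    (h1 : ∀ y : M, dist y u ≤ R → ∀ k : ℕ, dist (F^[k] y) u ≤ c * η ^ k)
    (h2 : ∀ m : ℕ, dist (F (x m)) (x (m + 1)) ≤ c * θ ^ m) :
    limsup (fun k => dist (x k) u ^ ((k : ℝ)⁻¹)) atTop ≤
        η ^ (Real.log θ / (Real.log η + Real.log θ)) ∧
      η ^ (Real.log θ / (Real.log η + Real.log θ)) =
        θ ^ (1 - Real.log θ / (Real.log η + Real.log θ)) ∧
      η ^ (Real.log θ / (Real.log η + Real.log θ)) < 1 := by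
  have hlogη : Real.log η < 0 := Real.log_neg hη0 hη1
  have hlogθ : Real.log θ < 0 := Real.log_neg hθ0 hθ1
  set L : ℝ := Real.log η + Real.log θ with hLdef
  have hLneg : L < 0 := by simp only [hLdef]; linarith
  have hLne : L ≠ 0 := ne_of_lt hLneg
  set lam : ℝ := Real.log θ / L with hlamdef
  have hlam0 : 0 < lam := div_pos_of_neg_of_neg hlogθ hLneg
  have h1lam : 1 - lam = Real.log η / L := by
    rw [hlamdef, eq_div_iff hLne, sub_mul, div_mul_cancel₀ _ hLne, hLdef]; ring
  have hlam1 : lam < 1 := by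
    have : 0 < 1 - lam := by rw [h1lam]; exact div_pos_of_neg_of_neg hlogη hLneg
    linarith
  set ρ : ℝ := η ^ lam with hρdef
  have hρ0 : 0 < ρ := Real.rpow_pos_of_pos hη0 _
  have hρ1 : ρ < 1 := Real.rpow_lt_one hη0.le hη1 hlam0
  have heq : ρ = θ ^ (1 - lam) := by
    rw [hρdef, Real.rpow_def_of_pos hη0, Real.rpow_def_of_pos hθ0]
    congr 1
    rw [h1lam, hlamdef]
    field_simp
  refine ⟨?_, heq, hρ1⟩
  -- geometric sum bound
  have hθ1' : (0:ℝ) < 1 - θ := by linarith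
  have hsum : ∀ n : ℕ, ∑ i ∈ Finset.range n, θ ^ i ≤ (1 - θ)⁻¹ := by
    intro n
    calc ∑ i ∈ Finset.range n, θ ^ i ≤ ∑' i : ℕ, θ ^ i :=
          Summable.sum_le_tsum _ (fun i _ => pow_nonneg hθ0.le i)
            (summable_geometric_of_lt_one hθ0.le hθ1)
      _ = (1 - θ)⁻¹ := tsum_geometric_of_lt_one hθ0.le hθ1
  -- shadowing estimate
  have chain : ∀ m j : ℕ, dist (x (m + j)) (F^[j] (x m)) ≤
      c * θ ^ m * ∑ i ∈ Finset.range j, θ ^ i := by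
    intro m j
    induction j with
    | zero => simp
    | succ j ih =>
      have step : dist (x (m + (j+1))) (F^[j+1] (x m)) ≤
          dist (x (m + j + 1)) (F (x (m + j))) + dist (F (x (m + j))) (F (F^[j] (x m))) := by
        rw [Function.iterate_succ_apply', ← Nat.add_assoc]
        exact dist_triangle _ _ _
      have e1 : dist (x (m + j + 1)) (F (x (m + j))) ≤ c * θ ^ (m + j) := by
        rw [dist_comm]; exact h2 (m + j)
      have e2 : dist (F (x (m + j))) (F (F^[j] (x m))) ≤ dist (x (m + j)) (F^[j] (x m)) :=
        hF_nonexp _ _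
      have : dist (x (m + (j+1))) (F^[j+1] (x m)) ≤
          c * θ ^ (m + j) + c * θ ^ m * ∑ i ∈ Finset.range j, θ ^ i := by
        calc dist (x (m + (j+1))) (F^[j+1] (x m)) ≤ _ := step
          _ ≤ c * θ ^ (m + j) + c * θ ^ m * ∑ i ∈ Finset.range j, θ ^ i := by
              gcongr
              exact le_trans e2 ih
      calc dist (x (m + (j+1))) (F^[j+1] (x m)) ≤
            c * θ ^ (m + j) + c * θ ^ m * ∑ i ∈ Finset.range j, θ ^ i := this
        _ = c * θ ^ m * ∑ i ∈ Finset.range (j+1), θ ^ i := by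
            rw [Finset.sum_range_succ, pow_add]; ring
  have key : ∀ m j : ℕ, dist (x m) u ≤ R →
      dist (x (m + j)) u ≤ c * η ^ j + c * (1 - θ)⁻¹ * θ ^ m := by
    intro m j hm
    calc dist (x (m + j)) u ≤ dist (x (m + j)) (F^[j] (x m)) + dist (F^[j] (x m)) u :=
          dist_triangle _ _ _
      _ ≤ c * θ ^ m * (1 - θ)⁻¹ + c * η ^ j := by
          gcongr
          · exact le_trans (chain m j) (by
              have := hsum j
              have h0 : 0 ≤ c * θ ^ m := by positivity
              exact mul_le_mul_of_nonneg_left this h0)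
          · exact h1 (x m) hm j
      _ = c * η ^ j + c * (1 - θ)⁻¹ * θ ^ m := by ring
  -- eventually x m is within R of u
  have hevR : ∀ᶠ n in atTop, dist (x n) u ≤ R := by
    have : Metric.closedBall u R ∈ 𝓝 u := Metric.closedBall_mem_nhds u hR
    filter_upwards [hx this] with n hn
    exact hn
  obtain ⟨M0, hM0⟩ := eventually_atTop.mp hevR
  set C : ℝ := c * η⁻¹ + c * (1 - θ)⁻¹ with hCdef
  have hC0 : 0 < C := by positivity
  -- the eventual geometric bound
  have hbound : ∀ᶠ k in atTop, dist (x k) u ≤ C * ρ ^ k := by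
    have hA : ∀ᶠ k : ℕ in atTop, (M0 : ℝ) ≤ (1 - lam) * k := by
      have ht : Tendsto (fun k : ℕ => (1 - lam) * (k : ℝ)) atTop atTop :=
        (tendsto_natCast_atTop_atTop).const_mul_atTop (by linarith)
      exact ht.eventually_ge_atTop _
    have hB : ∀ᶠ k : ℕ in atTop, (1 : ℝ) ≤ lam * k := by
      have ht : Tendsto (fun k : ℕ => lam * (k : ℝ)) atTop atTop :=
        (tendsto_natCast_atTop_atTop).const_mul_atTop hlam0
      exact ht.eventually_ge_atTop _
    filter_upwards [hA, hB] with k hAk hBk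
    set m : ℕ := ⌈(1 - lam) * (k : ℝ)⌉₊ with hmdef
    have hmge : (1 - lam) * (k : ℝ) ≤ (m : ℝ) := Nat.le_ceil _
    have hnn : (0 : ℝ) ≤ (1 - lam) * (k : ℝ) := mul_nonneg (by linarith) (Nat.cast_nonneg k)
    have hmlt : (m : ℝ) < (1 - lam) * (k : ℝ) + 1 := Nat.ceil_lt_add_one hnn
    have hmk : m ≤ k := by
      have : (m : ℝ) ≤ (k : ℝ) := by nlinarith
      exact_mod_cast this
    set j : ℕ := k - m with hjdef
    have hmj : m + j = k := by omega
    have hjreal : (j : ℝ) = (k : ℝ) - (m : ℝ) := by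
      rw [hjdef]; push_cast [hmk]; ring
    have hM0m : M0 ≤ m := by
      have : (M0 : ℝ) ≤ (m : ℝ) := le_trans hAk hmge
      exact_mod_cast this
    have hxmR : dist (x m) u ≤ R := hM0 m hM0m
    have hkey := key m j hxmR
    rw [hmj] at hkey
    -- bound η ^ j
    have hηj : η ^ j ≤ η⁻¹ * ρ ^ k := by
      have hjge : lam * (k : ℝ) - 1 ≤ (j : ℝ) := by rw [hjreal]; nlinarith
      have : η ^ (j : ℝ) ≤ η ^ (lam * (k : ℝ) - 1) :=
        Real.rpow_le_rpow_of_exponent_ge hη0 hη1.le hjge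
      rw [Real.rpow_natCast] at this
      refine le_trans this (le_of_eq ?_)
      rw [Real.rpow_sub hη0, Real.rpow_one, Real.rpow_mul hη0.le, ← hρdef,
        Real.rpow_natCast]
      ring
    -- bound θ ^ m
    have hθm : θ ^ m ≤ ρ ^ k := by
      have : θ ^ (m : ℝ) ≤ θ ^ ((1 - lam) * (k : ℝ)) :=
        Real.rpow_le_rpow_of_exponent_ge hθ0 hθ1.le hmge
      rw [Real.rpow_natCast] at this
      refine le_trans this (le_of_eq ?_)
      rw [Real.rpow_mul hθ0.le, ← heq, Real.rpow_natCast]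
    calc dist (x k) u ≤ c * η ^ j + c * (1 - θ)⁻¹ * θ ^ m := hkey
      _ ≤ c * (η⁻¹ * ρ ^ k) + c * (1 - θ)⁻¹ * ρ ^ k := by
          gcongr
      _ = C * ρ ^ k := by rw [hCdef]; ring
  -- pass to the limsup
  set g : ℕ → ℝ := fun k => C ^ ((k : ℝ)⁻¹) * ρ with hgdef
  have hgtendsto : Tendsto g atTop (𝓝 ρ) := by
    have h1' : Tendsto (fun k : ℕ => Real.log C * (k : ℝ)⁻¹) atTop (𝓝 0) := by
      simpa using tendsto_const_nhds.mul (tendsto_inv_atTop_nhds_zero_nat (𝕜 := ℝ))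
    have h2' : Tendsto (fun k : ℕ => C ^ ((k : ℝ)⁻¹)) atTop (𝓝 1) := by
      have : Tendsto (fun k : ℕ => Real.exp (Real.log C * (k : ℝ)⁻¹)) atTop (𝓝 1) := by
        simpa [Function.comp_def] using (Real.continuous_exp.tendsto 0).comp h1'
      refine this.congr fun k => ?_
      rw [← Real.rpow_def_of_pos hC0]
    simpa using h2'.mul_const ρ
  have hfg : ∀ᶠ k in atTop, dist (x k) u ^ ((k : ℝ)⁻¹) ≤ g k := by
    filter_upwards [hbound, eventually_ge_atTop 1] with k hk hk1
    have hkne : (k : ℝ) ≠ 0 := Nat.cast_ne_zero.mpr (by omega)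
    have hmono : dist (x k) u ^ ((k : ℝ)⁻¹) ≤ (C * ρ ^ k) ^ ((k : ℝ)⁻¹) :=
      Real.rpow_le_rpow dist_nonneg hk (by positivity)
    refine le_trans hmono (le_of_eq ?_)
    rw [hgdef]
    rw [Real.mul_rpow hC0.le (by positivity)]
    congr 1
    rw [← Real.rpow_natCast ρ k, ← Real.rpow_mul hρ0.le, mul_inv_cancel₀ hkne,
      Real.rpow_one]
  have hcb : IsCoboundedUnder (· ≤ ·) atTop (fun k : ℕ => dist (x k) u ^ ((k : ℝ)⁻¹)) := by
    refine IsBoundedUnder.isCoboundedUnder_le ⟨0, ?_⟩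
    exact eventually_map.mpr (Eventually.of_forall fun k =>
      Real.rpow_nonneg dist_nonneg _)
  have hbd : IsBoundedUnder (· ≤ ·) atTop g := hgtendsto.isBoundedUnder_le
  calc limsup (fun k => dist (x k) u ^ ((k : ℝ)⁻¹)) atTop ≤ limsup g atTop :=
        limsup_le_limsup hfg hcb hbd
    _ = ρ := hgtendsto.limsup_eq
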